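/- Let A be an integral domain with field of fractions 𝕂, let M be a submodule of A⟦x₁,…,xₙ⟧ᵖ, let (α_i,j_i), i = 1,…,q, be the vertices of the diagram of initial exponents 𝒩(M), and choose representatives Φ_i ∈ M with exp Φ_i = (α_i,j_i). Let S be the multiplicative subset of A generated by the initial coefficients Φ_{i,(α_i,j_i)}, let B be a subring of 𝕂 containing S⁻¹A, and let Δ₁,…,Δ_q,Δ be the partition of ℕⁿ×{1,…,p} determined by the (α_i,j_i) as in Hironaka's division algorithm. Then: (a) 𝒩(M) = Δ₁ ∪ ⋯ ∪ Δ_q; (b) Φ₁,…,Φ_q generate the B⟦x⟧-module B⟦x⟧·M; (c) for G ∈ B⟦x⟧ᵖ, one has G ∈ B⟦x⟧·M if and only if the remainder R(G) of the division of G by Φ₁,…,Φ_q is zero. -/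

import Mathlib

open Classical

/-- Index set `ℕⁿ × {1,…,p}` for coefficients of elements of `A⟦x₁,…,xₙ⟧ᵖ`. -/
abbrev Idx (n p : ℕ) := (Fin n →₀ ℕ) × Fin p

/-- Total degree `|α|` of a multiindex. -/
def degF {n : ℕ} (α : Fin n →₀ ℕ) : ℕ := ∑ i, α i

/-- Lexicographic order on multiindices. -/
def lexLT {n : ℕ} (α β : Fin n →₀ ℕ) : Prop :=
  ∃ i : Fin n, (∀ j, j < i → α j = β j) ∧ α i < β i

/-- The total order on `ℕⁿ × {1,…,p}` comparing `(|α|, j, α)` lexicographically. -/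
def idxLT {n p : ℕ} (a b : Idx n p) : Prop :=
  degF a.1 < degF b.1 ∨
    (degF a.1 = degF b.1 ∧ ((a.2 : ℕ) < (b.2 : ℕ) ∨ (a.2 = b.2 ∧ lexLT a.1 b.1)))

def idxLE {n p : ℕ} (a b : Idx n p) : Prop := idxLT a b ∨ a = b

/-- Support of `F ∈ A⟦x⟧ᵖ`. -/
def suppV {n p : ℕ} {A : Type} [Semiring A] (F : Fin p → MvPowerSeries (Fin n) A) :
    Set (Idx n p) :=
  {d | MvPowerSeries.coeff d.1 (F d.2) ≠ 0}

/-- `d` is the initial exponent `exp F` of `F`. -/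
def IsExpOf {n p : ℕ} {A : Type} [Semiring A] (F : Fin p → MvPowerSeries (Fin n) A)
    (d : Idx n p) : Prop :=
  d ∈ suppV F ∧ ∀ d' ∈ suppV F, idxLE d d'

/-- `S + ℕⁿ`, for `S ⊆ ℕⁿ × {1,…,p}`. -/
def setShift {n p : ℕ} (S : Set (Idx n p)) : Set (Idx n p) :=
  {d | ∃ s ∈ S, ∃ β : Fin n →₀ ℕ, d = (s.1 + β, s.2)}

/-- The diagram of initial exponents `𝒩(M) = {exp F : F ∈ M ∖ {0}}` of a submodule `M`
of `A⟦x⟧ᵖ`. -/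
def diagramOf {n p : ℕ} {A : Type} [CommRing A]
    (M : Submodule (MvPowerSeries (Fin n) A) (Fin p → MvPowerSeries (Fin n) A)) :
    Set (Idx n p) :=
  {d | ∃ F ∈ M, F ≠ 0 ∧ IsExpOf F d}

/-- `d` is a vertex of the diagram `𝒩`: `(𝒩 ∖ {d}) + ℕⁿ ≠ 𝒩`. -/
def IsVertex {n p : ℕ} (𝒩 : Set (Idx n p)) (d : Idx n p) : Prop :=
  setShift (𝒩 \ {d}) ≠ 𝒩

/-- `(α_i, j_i) + ℕⁿ`. -/
def DeltaFull {n p q : ℕ} (e : Fin q → Idx n p) (i : Fin q) : Set (Idx n p) :=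
  {d | d.2 = (e i).2 ∧ ∃ β : Fin n →₀ ℕ, d.1 = (e i).1 + β}

/-- The sets `Δ_i` of Hironaka's division: `Δ_i = ((α_i,j_i) + ℕⁿ) ∖ (Δ_1 ∪ ⋯ ∪ Δ_{i−1})`. -/
def Delta {n p q : ℕ} (e : Fin q → Idx n p) (i : Fin q) : Set (Idx n p) :=
  DeltaFull e i \ ⋃ (k : Fin q) (hk : k < i), Delta e k
termination_by i.val
decreasing_by exact hk

/-- The complementary region `Δ = ℕⁿ×{1,…,p} ∖ (Δ_1 ∪ ⋯ ∪ Δ_q)`. -/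
def DeltaC {n p q : ℕ} (e : Fin q → Idx n p) : Set (Idx n p) :=
  (⋃ i : Fin q, Delta e i)ᶜ

-- sanity checks for instances used later

/-- Membership in the `B⟦x⟧`-module `B⟦x⟧·M` generated inside `𝕂⟦x⟧ᵖ` by (the image of) a
submodule `M` of `A⟦x⟧ᵖ`, where `B` is a subring of `𝕂`. -/
def MemBxM {n p : ℕ} {A : Type} [CommRing A] [IsDomain A]
    (B : Subring (FractionRing A))
    (M : Submodule (MvPowerSeries (Fin n) A) (Fin p → MvPowerSeries (Fin n) A))
    (G : Fin p → MvPowerSeries (Fin n) (FractionRing A)) : Prop :=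
  ∃ (k : ℕ) (c : Fin k → MvPowerSeries (Fin n) (FractionRing A))
    (m : Fin k → (Fin p → MvPowerSeries (Fin n) A)),
    (∀ i α, MvPowerSeries.coeff α (c i) ∈ B) ∧
    (∀ i, m i ∈ M) ∧
    G = ∑ i, fun j => c i * MvPowerSeries.map (algebraMap A (FractionRing A)) (m i j)


section Order
variable {n p : ℕ}

def idxKey (d : Idx n p) : ℕ ×ₗ (ℕ ×ₗ Lex (Fin n →₀ ℕ)) :=
  toLex (degF d.1, toLex ((d.2 : ℕ), toLex d.1))

lemma idxLT_iff_key {a b : Idx n p} : idxLT a b ↔ idxKey a < idxKey b := by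
  simp only [idxKey, Prod.Lex.lt_iff, idxLT, lexLT, Finsupp.Lex.lt_iff, ofLex_toLex]
  constructor
  · rintro (h | ⟨h1, h2 | ⟨h2, i, hi⟩⟩)
    · exact Or.inl h
    · exact Or.inr ⟨h1, Or.inl h2⟩
    · exact Or.inr ⟨h1, Or.inr ⟨by rw [h2], ⟨i, hi⟩⟩⟩
  · rintro (h | ⟨h1, h2 | ⟨h2, i, hi⟩⟩)
    · exact Or.inl h
    · exact Or.inr ⟨h1, Or.inl h2⟩
    · exact Or.inr ⟨h1, Or.inr ⟨Fin.ext h2, ⟨i, hi⟩⟩⟩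

lemma idxKey_inj : Function.Injective (idxKey (n := n) (p := p)) := by
  intro a b h
  simp only [idxKey, toLex_inj, Prod.mk.injEq] at h
  exact Prod.ext h.2.2 (Fin.ext h.2.1)

lemma idxLT_wf : WellFounded (idxLT (n := n) (p := p)) := by
  have : WellFoundedLT (ℕ ×ₗ (ℕ ×ₗ Lex (Fin n →₀ ℕ))) := inferInstance
  exact Subrelation.wf (fun {a b} h => idxLT_iff_key.mp h)
    (InvImage.wf idxKey this.wf)

lemma idxLT_trichot (a b : Idx n p) : idxLT a b ∨ a = b ∨ idxLT b a := by
  rcases lt_trichotomy (idxKey a) (idxKey b) with h | h | h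
  · exact Or.inl (idxLT_iff_key.mpr h)
  · exact Or.inr (Or.inl (idxKey_inj h))
  · exact Or.inr (Or.inr (idxLT_iff_key.mpr h))

lemma idxLT_irrefl (a : Idx n p) : ¬ idxLT a a := fun h =>
  lt_irrefl _ (idxLT_iff_key.mp h)

lemma idxLT_trans {a b c : Idx n p} (h1 : idxLT a b) (h2 : idxLT b c) : idxLT a c :=
  idxLT_iff_key.mpr (lt_trans (idxLT_iff_key.mp h1) (idxLT_iff_key.mp h2))

lemma idxLT_asymm {a b : Idx n p} (h1 : idxLT a b) (h2 : idxLT b a) : False :=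
  idxLT_irrefl a (idxLT_trans h1 h2)

lemma idxLE_of_not_lt {a b : Idx n p} (h : ¬ idxLT b a) : idxLE a b := by
  rcases idxLT_trichot a b with h' | h' | h'
  · exact Or.inl h'
  · exact Or.inr h'
  · exact absurd h' h

lemma degF_add (α β : Fin n →₀ ℕ) : degF (α + β) = degF α + degF β := by
  simp [degF, Finsupp.add_apply, Finset.sum_add_distrib]

lemma idxLT_shift {a b : Idx n p} (β : Fin n →₀ ℕ) (h : idxLT a b) :
    idxLT (a.1 + β, a.2) (b.1 + β, b.2) := by
  rcases h with h | ⟨h1, h2 | ⟨h2, i, hi1, hi2⟩⟩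
  · exact Or.inl (by simp [degF_add]; omega)
  · exact Or.inr ⟨by simp [degF_add, h1], Or.inl h2⟩
  · exact Or.inr ⟨by simp [degF_add, h1], Or.inr ⟨h2, i,
      fun j hj => by simp [Finsupp.add_apply, hi1 j hj],
      by simp [Finsupp.add_apply]; omega⟩⟩

lemma idxLE_shift {a b : Idx n p} (β : Fin n →₀ ℕ) (h : idxLE a b) :
    idxLE (a.1 + β, a.2) (b.1 + β, b.2) := by
  rcases h with h | rfl
  · exact Or.inl (idxLT_shift β h)
  · exact Or.inr rfl

lemma idxLT_eq_of_le {a b : Idx n p} (h : idxLE a b) (h2 : ¬ idxLT a b) : a = b := by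
  rcases h with h | h
  · exact absurd h h2
  · exact h

lemma degF_le_of_idxLT {a b : Idx n p} (h : idxLT a b) : degF a.1 ≤ degF b.1 := by
  rcases h with h | ⟨h, _⟩
  · omega
  · omega
end Order

section Two
variable {n p : ℕ} {A : Type} [CommRing A]

lemma suppV_nonempty {F : Fin p → MvPowerSeries (Fin n) A} (h : F ≠ 0) :
    (suppV F).Nonempty := by
  by_contra hc
  apply h
  funext j
  apply MvPowerSeries.ext
  intro α
  by_contra h0
  exact hc ⟨(α, j), h0⟩

lemma exists_exp {F : Fin p → MvPowerSeries (Fin n) A} (h : F ≠ 0) :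
    ∃ d, IsExpOf F d := by
  obtain ⟨d, hd, hmin⟩ := idxLT_wf.has_min (suppV F) (suppV_nonempty h)
  exact ⟨d, hd, fun d' hd' => idxLE_of_not_lt (hmin d' hd')⟩

-- multiplication by monomial
lemma coeff_monomial_mul (β : Fin n →₀ ℕ) (f : MvPowerSeries (Fin n) A) (γ : Fin n →₀ ℕ) :
    MvPowerSeries.coeff γ ((MvPowerSeries.monomial β 1) * f) =
      if β ≤ γ then MvPowerSeries.coeff (γ - β) f else 0 := by
  rw [MvPowerSeries.coeff_monomial_mul]
  simp

variable [IsDomain A]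
variable {M : Submodule (MvPowerSeries (Fin n) A) (Fin p → MvPowerSeries (Fin n) A)}

lemma shift_mem_suppV {F : Fin p → MvPowerSeries (Fin n) A} {d : Idx n p} (β : Fin n →₀ ℕ) :
    (d.1 + β, d.2) ∈ suppV (fun j => (MvPowerSeries.monomial β 1) * F j) ↔ d ∈ suppV F := by
  simp only [suppV, Set.mem_setOf_eq, coeff_monomial_mul]
  rw [if_pos le_add_self]
  simp

lemma exp_shift {F : Fin p → MvPowerSeries (Fin n) A} {d : Idx n p} (hF : IsExpOf F d)
    (β : Fin n →₀ ℕ) :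
    IsExpOf (fun j => (MvPowerSeries.monomial β 1) * F j) (d.1 + β, d.2) := by
  constructor
  · exact (shift_mem_suppV β).mpr hF.1
  · rintro ⟨γ, j⟩ hd'
    simp only [suppV, Set.mem_setOf_eq, coeff_monomial_mul] at hd'
    split_ifs at hd' with hle
    · obtain ⟨δ, rfl⟩ := le_iff_exists_add.mp hle
      have : (β + δ) - β = δ := by simp
      rw [this] at hd'
      have := hF.2 (δ, j) hd'
      have h2 := idxLE_shift β this
      simpa [add_comm β δ] using h2
    · exact absurd rfl hd'

lemma diagram_shift_closed : setShift (diagramOf M) = diagramOf M := by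
  apply Set.Subset.antisymm
  · rintro d ⟨s, hs, β, rfl⟩
    obtain ⟨F, hFM, hF0, hFe⟩ := hs
    refine ⟨fun j => (MvPowerSeries.monomial β 1) * F j, ?_, ?_, exp_shift hFe β⟩
    · exact M.smul_mem ((MvPowerSeries.monomial β 1)) hFM
    · intro hc
      apply hF0
      funext j
      apply MvPowerSeries.ext
      intro α
      by_contra h0
      have : ((α + β, j) : Idx n p) ∈ suppV (fun j => (MvPowerSeries.monomial β 1) * F j) :=
        (shift_mem_suppV (d := (α, j)) β).mpr h0
      rw [hc] at this
      simp [suppV] at this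
  · intro d hd
    exact ⟨d, hd, 0, by simp⟩

lemma vertex_mem_diagram {d : Idx n p} (h : IsVertex (diagramOf M) d) : d ∈ diagramOf M := by
  by_contra hc
  apply h
  have : diagramOf M \ {d} = diagramOf M := by
    ext x; simp only [Set.mem_diff, Set.mem_singleton_iff, and_iff_left_iff_imp]
    rintro hx rfl; exact hc hx
  rw [this, diagram_shift_closed]

-- degF β ≤ D → β ≤ const D
lemma le_const_of_degF {D : ℕ} {β : Fin n →₀ ℕ} (h : degF β ≤ D) :
    β ≤ Finsupp.equivFunOnFinite.symm (fun _ => D) := by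
  intro i
  have : β i ≤ degF β := Finset.single_le_sum (f := fun j => β j) (fun _ _ => Nat.zero_le _)
    (Finset.mem_univ i)
  simpa using le_trans this h

lemma diagram_subset_union {q : ℕ} {e : Fin q → Idx n p}
    (hevert : ∀ d : Idx n p, IsVertex (diagramOf M) d ↔ ∃ i, e i = d) :
    diagramOf M ⊆ ⋃ i : Fin q, DeltaFull e i := by
  intro d hd
  -- minimal element below d
  set T : Finset (Fin n →₀ ℕ) :=
    (Finset.Iic d.1).filter (fun α => (α, d.2) ∈ diagramOf M) with hT
  have hdT : d.1 ∈ T := by simp [hT]; exact hd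
  obtain ⟨m, hmT, hmin⟩ := T.exists_minimal ⟨d.1, hdT⟩
  simp only [hT, Finset.mem_filter, Finset.mem_Iic] at hmT
  have hvert : IsVertex (diagramOf M) (m, d.2) := by
    intro hc
    have hmem : ((m, d.2) : Idx n p) ∈ setShift (diagramOf M \ {(m, d.2)}) := by
      rw [hc]; exact hmT.2
    obtain ⟨s, ⟨hs1, hs2⟩, β, hβ⟩ := hmem
    have hs1' : s.1 + β = m ∧ s.2 = d.2 := by
      have := Prod.ext_iff.mp hβ; exact ⟨this.1.symm, this.2.symm⟩
    have hne : s.1 ≠ m := by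
      intro hc
      apply hs2
      simp only [Set.mem_singleton_iff]
      exact Prod.ext hc hs1'.2
    have hlt : s.1 < m :=
      lt_of_le_of_ne (le_iff_exists_add.mpr ⟨β, hs1'.1.symm⟩) hne
    refine absurd (hmin ?_ hlt.le) (not_le_of_gt hlt)
    simp only [hT, Finset.mem_filter, Finset.mem_Iic]
    refine ⟨le_trans hlt.le hmT.1, ?_⟩
    have hsm : ((s.1, s.2) : Idx n p) ∈ diagramOf M := hs1
    rwa [hs1'.2] at hsm
  obtain ⟨i, hi⟩ := (hevert _).mp hvert
  refine Set.mem_iUnion.mpr ⟨i, ?_⟩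
  obtain ⟨β, hβ⟩ := le_iff_exists_add.mp hmT.1
  exact ⟨by rw [hi], β, by rw [hi]; exact hβ⟩

lemma delta_subset_full {q : ℕ} {e : Fin q → Idx n p} (i : Fin q) :
    Delta e i ⊆ DeltaFull e i := by
  rw [Delta]; exact Set.diff_subset

lemma union_delta_eq_full {q : ℕ} (e : Fin q → Idx n p) :
    (⋃ i : Fin q, Delta e i) = ⋃ i : Fin q, DeltaFull e i := by
  apply Set.Subset.antisymm
  · exact Set.iUnion_mono (fun i => delta_subset_full i)
  · intro d hd
    obtain ⟨i, hi⟩ := Set.mem_iUnion.mp hd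
    by_cases hc : d ∈ ⋃ (k : Fin q) (hk : k < i), Delta e k
    · obtain ⟨k, hk⟩ := Set.mem_iUnion.mp hc
      obtain ⟨hki, hdk⟩ := Set.mem_iUnion.mp hk
      exact Set.mem_iUnion.mpr ⟨k, hdk⟩
    · exact Set.mem_iUnion.mpr ⟨i, by rw [Delta]; exact ⟨hi, hc⟩⟩

lemma delta_disjoint {q : ℕ} {e : Fin q → Idx n p} {i k : Fin q} (hik : i ≠ k)
    {d : Idx n p} (hi : d ∈ Delta e i) (hk : d ∈ Delta e k) : False := by
  rcases lt_or_gt_of_ne hik with h | h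
  · rw [Delta] at hk
    exact hk.2 (Set.mem_iUnion.mpr ⟨i, Set.mem_iUnion.mpr ⟨h, hi⟩⟩)
  · rw [Delta] at hi
    exact hi.2 (Set.mem_iUnion.mpr ⟨k, Set.mem_iUnion.mpr ⟨h, hk⟩⟩)

-- part (a)
lemma part_a {q : ℕ} {e : Fin q → Idx n p}
    (hevert : ∀ d : Idx n p, IsVertex (diagramOf M) d ↔ ∃ i, e i = d) :
    diagramOf M = ⋃ i : Fin q, Delta e i := by
  rw [union_delta_eq_full]
  apply Set.Subset.antisymm (diagram_subset_union hevert)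
  intro d hd
  obtain ⟨i, hji, β, hβ⟩ := Set.mem_iUnion.mp hd
  have hei : e i ∈ diagramOf M := vertex_mem_diagram ((hevert _).mpr ⟨i, rfl⟩)
  rw [← diagram_shift_closed]
  exact ⟨e i, hei, β, Prod.ext hβ hji⟩
end Two

section Three
variable {n p : ℕ} {A : Type} [CommRing A] [IsDomain A]
  {B : Subring (FractionRing A)}
  {M : Submodule (MvPowerSeries (Fin n) A) (Fin p → MvPowerSeries (Fin n) A)}

local notation "𝕂" => FractionRing A
local notation "amap" => algebraMap A (FractionRing A)

lemma coeff_mul_map_mem (hBA : ∀ a : A, algebraMap A (FractionRing A) a ∈ B) {c : MvPowerSeries (Fin n) 𝕂} {f : MvPowerSeries (Fin n) A}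
    (hc : ∀ α, MvPowerSeries.coeff α c ∈ B) (α : Fin n →₀ ℕ) :
    MvPowerSeries.coeff α (c * MvPowerSeries.map amap f) ∈ B := by
  rw [MvPowerSeries.coeff_mul]
  apply Subring.sum_mem
  intro x _
  exact Subring.mul_mem _ (hc x.1) (by rw [MvPowerSeries.coeff_map]; exact hBA _)

lemma memBxM_coeff_mem (hBA : ∀ a : A, algebraMap A (FractionRing A) a ∈ B) {G : Fin p → MvPowerSeries (Fin n) 𝕂} (hG : MemBxM B M G) :
    ∀ d : Idx n p, MvPowerSeries.coeff d.1 (G d.2) ∈ B := by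
  obtain ⟨k, c, m, hc, hm, rfl⟩ := hG
  intro d
  rw [Finset.sum_apply]
  rw [map_sum]
  exact Subring.sum_mem _ (fun i _ => coeff_mul_map_mem hBA (hc i) d.1)

lemma memBxM_sub {G H : Fin p → MvPowerSeries (Fin n) 𝕂} (hG : MemBxM B M G)
    (hH : MemBxM B M H) : MemBxM B M (G - H) := by
  obtain ⟨k, c, m, hc, hm, rfl⟩ := hG
  obtain ⟨k', c', m', hc', hm', rfl⟩ := hH
  refine ⟨k + k', Fin.append c (fun i => -(c' i)), Fin.append m m', ?_, ?_, ?_⟩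
  · intro i α
    refine Fin.addCases (motive := fun i => MvPowerSeries.coeff α
      ((Fin.append c (fun i => -(c' i))) i) ∈ B) ?_ ?_ i
    · intro j; rw [Fin.append_left]; exact hc j α
    · intro j; rw [Fin.append_right]
      rw [map_neg]
      exact Subring.neg_mem _ (hc' j α)
  · intro i
    refine Fin.addCases (motive := fun i => Fin.append m m' i ∈ M) ?_ ?_ i
    · intro j; rw [Fin.append_left]; exact hm j
    · intro j; rw [Fin.append_right]; exact hm' j
  · rw [Fin.sum_univ_add, sub_eq_add_neg]
    congr 1
    · exact Finset.sum_congr rfl fun i _ => by simp only [Fin.append_left]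
    · rw [← Finset.sum_neg_distrib]
      exact Finset.sum_congr rfl fun i _ => funext fun j => by
        simp only [Fin.append_right, Pi.neg_apply, neg_mul]

-- the key truncation lemma
lemma exp_mem_diagram_of_memBxM {H : Fin p → MvPowerSeries (Fin n) 𝕂}
    (hH : MemBxM B M H) (hH0 : H ≠ 0) {d : Idx n p} (hd : IsExpOf H d) :
    d ∈ diagramOf M := by
  obtain ⟨k, c, m, hc, hm, rfl⟩ := hH
  set D := degF d.1 with hD
  set Dc : Fin n →₀ ℕ := Finsupp.equivFunOnFinite.symm (fun _ => D) with hDc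
  obtain ⟨b, hb⟩ := IsLocalization.exist_integer_multiples (nonZeroDivisors A)
    ((Finset.univ : Finset (Fin k)) ×ˢ (Finset.Iic Dc))
    (fun x => MvPowerSeries.coeff x.2 (c x.1))
  -- p i : truncated, denominator-cleared coefficients
  have key : ∀ (i : Fin k) (β : Fin n →₀ ℕ), degF β ≤ D →
      ∃ a : A, amap a = (b : A) • MvPowerSeries.coeff β (c i) := by
    intro i β hβ
    exact hb (i, β) (Finset.mem_product.mpr ⟨Finset.mem_univ _,
      Finset.mem_Iic.mpr (le_const_of_degF hβ)⟩)
  classical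
  set pp : Fin k → MvPowerSeries (Fin n) A := fun i =>
    fun β => if h : degF β ≤ D then choose (key i β h) else 0 with hpp
  set F : Fin p → MvPowerSeries (Fin n) A := ∑ i, (pp i) • (m i) with hF
  have hFM : F ∈ M := Submodule.sum_mem M (fun i _ => M.smul_mem _ (hm i))
  have hcoeff : ∀ d' : Idx n p, degF d'.1 ≤ D →
      MvPowerSeries.coeff d'.1
        ((MvPowerSeries.map amap (F d'.2))) =
      amap b * MvPowerSeries.coeff d'.1 ((∑ i, fun j => c i *
        MvPowerSeries.map amap (m i j)) d'.2) := by
    intro d' hd'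
    rw [Finset.sum_apply, map_sum, Finset.mul_sum]
    have : F d'.2 = ∑ i, (pp i) * (m i d'.2) := by
      rw [hF, Finset.sum_apply]; rfl
    rw [this, map_sum, map_sum]
    apply Finset.sum_congr rfl
    intro i _
    rw [map_mul, MvPowerSeries.coeff_mul, MvPowerSeries.coeff_mul,
      Finset.mul_sum]
    apply Finset.sum_congr rfl
    intro x hx
    have hxsum : x.1 + x.2 = d'.1 := Finset.HasAntidiagonal.mem_antidiagonal.mp hx
    have hx1 : degF x.1 ≤ D := by
      have := degF_add x.1 x.2
      rw [hxsum] at this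
      omega
    have hco : MvPowerSeries.coeff x.1 (MvPowerSeries.map amap (pp i)) =
        amap b * MvPowerSeries.coeff x.1 (c i) := by
      rw [MvPowerSeries.coeff_map]
      have : MvPowerSeries.coeff x.1 (pp i) = choose (key i x.1 hx1) := by
        change (fun β => if h : degF β ≤ D then choose (key i β h) else 0 :
          MvPowerSeries (Fin n) A) x.1 = _
        exact dif_pos hx1
      rw [this, choose_spec (key i x.1 hx1)]
      simp [Algebra.smul_def]
    rw [hco]
    ring
  have hbne : amap b ≠ 0 := by
    intro hc0
    have h0 : amap (b : A) = amap (0 : A) := by rw [hc0, map_zero]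
    exact nonZeroDivisors.coe_ne_zero b (IsFractionRing.injective A 𝕂 h0)
  have hdF : MvPowerSeries.coeff d.1 (F d.2) ≠ 0 := by
    intro h0
    have h1 := hcoeff d (le_of_eq rfl)
    rw [MvPowerSeries.coeff_map, h0, map_zero] at h1
    exact hd.1 (by
      rcases mul_eq_zero.mp h1.symm with h | h
      · exact absurd h hbne
      · exact h)
  refine ⟨F, hFM, ?_, ⟨hdF, ?_⟩⟩
  · intro h0
    rw [h0] at hdF
    simp at hdF
  · rintro d' hd'
    apply idxLE_of_not_lt
    intro hlt
    have hdeg : degF d'.1 ≤ D := degF_le_of_idxLT hlt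
    have h1 := hcoeff d' hdeg
    have h2 : MvPowerSeries.coeff d'.1 (MvPowerSeries.map amap (F d'.2)) ≠ 0 := by
      rw [MvPowerSeries.coeff_map]
      intro h0
      have h0' : amap (MvPowerSeries.coeff d'.1 (F d'.2)) = amap (0 : A) := by
        rw [h0, map_zero]
      exact hd' (IsFractionRing.injective A 𝕂 h0')
    rw [h1] at h2
    have h3 : d' ∈ suppV (∑ i, fun j => c i * MvPowerSeries.map amap (m i j)) := by
      intro h0
      exact h2 (by rw [h0, mul_zero])
    exact idxLT_asymm hlt (by
      rcases hd.2 d' h3 with h | h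
      · exact h
      · rw [h] at hlt; exact absurd hlt (fun hh => idxLT_asymm hh hh))
end Three

noncomputable section Four
variable {n p q : ℕ} {A : Type} [CommRing A] [IsDomain A]
  (e : Fin q → Idx n p) (Φ : Fin q → (Fin p → MvPowerSeries (Fin n) A))

local notation "𝕂" => FractionRing A
local notation "amap" => algebraMap A (FractionRing A)

/-- initial coefficient of Φ i -/
def cinit (i : Fin q) : A := MvPowerSeries.coeff (e i).1 (Φ i (e i).2)

/-- the position in the order at which the coefficient of `Q i` at `β` "sits" -/
def slot (i : Fin q) (β : Fin n →₀ ℕ) : Idx n p := ((e i).1 + β, (e i).2)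

/-- scaling factor in the division recursion -/
def cfac (d : Idx n p) : 𝕂 :=
  if h : ∃ i, d ∈ Delta e i then (amap (cinit e Φ h.choose))⁻¹ else 1

/-- the coefficients of the quotients and remainder, defined by well-founded recursion -/
def divF (G : Fin p → MvPowerSeries (Fin n) 𝕂) : Idx n p → 𝕂 :=
  idxLT_wf.fix (fun d rec =>
    cfac e Φ d *
      (MvPowerSeries.coeff d.1 (G d.2) -
        ∑ i : Fin q, ∑ x ∈ Finset.HasAntidiagonal.antidiagonal d.1,
          (if h2 : (slot e i x.1 ∈ Delta e i ∧ idxLT (slot e i x.1) d)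
           then rec (slot e i x.1) h2.2 * amap (MvPowerSeries.coeff x.2 (Φ i d.2))
           else 0)))

/-- the lower-order part of the coefficient of `Σ Q_i Φ_i` at `d` -/
def Lsum (G : Fin p → MvPowerSeries (Fin n) 𝕂) (d : Idx n p) : 𝕂 :=
  ∑ i : Fin q, ∑ x ∈ Finset.HasAntidiagonal.antidiagonal d.1,
    (if _h2 : (slot e i x.1 ∈ Delta e i ∧ idxLT (slot e i x.1) d)
     then divF e Φ G (slot e i x.1) * amap (MvPowerSeries.coeff x.2 (Φ i d.2))
     else 0)

lemma divF_eq (G : Fin p → MvPowerSeries (Fin n) 𝕂) (d : Idx n p) :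
    divF e Φ G d = cfac e Φ d * (MvPowerSeries.coeff d.1 (G d.2) - Lsum e Φ G d) := by
  rw [divF, idxLT_wf.fix_eq]
  rfl

/-- quotient series -/
def Qs (G : Fin p → MvPowerSeries (Fin n) 𝕂) (i : Fin q) : MvPowerSeries (Fin n) 𝕂 :=
  fun β => if slot e i β ∈ Delta e i then divF e Φ G (slot e i β) else 0

/-- remainder series -/
def Rs (G : Fin p → MvPowerSeries (Fin n) 𝕂) (j : Fin p) : MvPowerSeries (Fin n) 𝕂 :=
  fun α => if ((α, j) : Idx n p) ∈ DeltaC e then divF e Φ G (α, j) else 0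

variable (hΦe : ∀ i, IsExpOf (Φ i) (e i))
  (hcinj : Function.Injective (amap))

include hΦe in
lemma cinit_ne_zero (i : Fin q) : cinit e Φ i ≠ 0 := (hΦe i).1

include hΦe in
/-- the key coefficient computation for `Σ Q_i Φ_i` -/
lemma coeff_sum_QPhi (G : Fin p → MvPowerSeries (Fin n) 𝕂) (d : Idx n p) :
    MvPowerSeries.coeff d.1 ((∑ i, fun j => Qs e Φ G i *
        MvPowerSeries.map amap (Φ i j)) d.2) =
      Lsum e Φ G d +
        (if h : ∃ i, d ∈ Delta e i then divF e Φ G d * amap (cinit e Φ h.choose) else 0) := by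
  rw [Finset.sum_apply, map_sum]
  have hterm : ∀ i : Fin q,
      MvPowerSeries.coeff d.1 (Qs e Φ G i * MvPowerSeries.map amap (Φ i d.2)) =
      ∑ x ∈ Finset.HasAntidiagonal.antidiagonal d.1,
        ((if _h2 : (slot e i x.1 ∈ Delta e i ∧ idxLT (slot e i x.1) d)
          then divF e Φ G (slot e i x.1) * amap (MvPowerSeries.coeff x.2 (Φ i d.2))
          else 0) +
         (if (slot e i x.1 = d ∧ slot e i x.1 ∈ Delta e i ∧ x.2 = (e i).1)
          then divF e Φ G d * amap (cinit e Φ i) else 0)) := by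
    intro i
    rw [MvPowerSeries.coeff_mul]
    apply Finset.sum_congr rfl
    intro x hx
    have hxsum : x.1 + x.2 = d.1 := Finset.HasAntidiagonal.mem_antidiagonal.mp hx
    have hQco : MvPowerSeries.coeff x.1 (Qs e Φ G i) =
        if slot e i x.1 ∈ Delta e i then divF e Φ G (slot e i x.1) else 0 := by
      rw [MvPowerSeries.coeff_apply]; rfl
    rw [hQco, MvPowerSeries.coeff_map]
    by_cases h1 : slot e i x.1 ∈ Delta e i
    · by_cases h2 : idxLT (slot e i x.1) d
      · rw [if_pos h1, dif_pos ⟨h1, h2⟩, if_neg, add_zero]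
        rintro ⟨hd, -, -⟩
        rw [hd] at h2
        exact idxLT_irrefl d h2
      · rw [if_pos h1, dif_neg (fun hh => h2 hh.2)]
        by_cases h3 : MvPowerSeries.coeff x.2 (Φ i d.2) = 0
        · rw [h3, map_zero, mul_zero, zero_add]
          rw [if_neg]
          rintro ⟨hd, -, hx2⟩
          have hj : d.2 = (e i).2 := by rw [← hd]; rfl
          exact cinit_ne_zero e Φ hΦe i (by rw [cinit, ← hx2, ← hj]; exact h3)
        · -- nonzero coefficient: slot = d and x.2 = e i .1
          have hsupp : ((x.2, d.2) : Idx n p) ∈ suppV (Φ i) := h3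
          have hle := (hΦe i).2 _ hsupp
          have hle2 := idxLE_shift x.1 hle
          have hshift : ((x.2 + x.1, d.2) : Idx n p) = d := by
            rw [Prod.ext_iff]
            exact ⟨by rw [add_comm]; exact hxsum, rfl⟩
          rw [hshift] at hle2
          have heq : slot e i x.1 = d := idxLT_eq_of_le hle2 h2
          have hx2 : x.2 = (e i).1 := by
            have : (e i).1 + x.1 = d.1 := congrArg Prod.fst heq
            have h5 : x.1 + x.2 = (e i).1 + x.1 := by rw [hxsum, ← this]
            rw [add_comm x.1 x.2] at h5
            exact add_right_cancel h5
          rw [if_pos ⟨heq, h1, hx2⟩, zero_add]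
          have hj : d.2 = (e i).2 := by rw [← heq]; rfl
          rw [heq, hx2, hj]
          rfl
    · rw [if_neg h1, zero_mul, dif_neg (fun hh => h1 hh.1),
        if_neg (fun hh => h1 hh.2.1), add_zero]
  calc ∑ i : Fin q, MvPowerSeries.coeff d.1
        (Qs e Φ G i * MvPowerSeries.map amap (Φ i d.2))
      = Lsum e Φ G d + ∑ i : Fin q, ∑ x ∈ Finset.HasAntidiagonal.antidiagonal d.1,
        (if (slot e i x.1 = d ∧ slot e i x.1 ∈ Delta e i ∧ x.2 = (e i).1)
          then divF e Φ G d * amap (cinit e Φ i) else 0) := by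
        rw [Lsum, ← Finset.sum_add_distrib]
        apply Finset.sum_congr rfl
        intro i _
        rw [← Finset.sum_add_distrib]
        exact hterm i
    _ = _ := by
        congr 1
        by_cases h : ∃ i, d ∈ Delta e i
        · rw [dif_pos h]
          set i₀ := h.choose with hi₀
          have hd₀ : d ∈ Delta e i₀ := h.choose_spec
          obtain ⟨hj₀, β₀, hβ₀⟩ := delta_subset_full i₀ hd₀
          rw [Finset.sum_eq_single i₀]
          · rw [Finset.sum_eq_single ((β₀, (e i₀).1) : (Fin n →₀ ℕ) × (Fin n →₀ ℕ))]
            · rw [if_pos]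
              refine ⟨?_, ?_, rfl⟩
              · rw [Prod.ext_iff]
                exact ⟨by rw [slot]; exact hβ₀.symm, hj₀.symm⟩
              · have : slot e i₀ β₀ = d := Prod.ext hβ₀.symm hj₀.symm
                rw [this]; exact hd₀
            · intro x hx hne
              rw [if_neg]
              rintro ⟨h1, h2, h3⟩
              apply hne
              have hx1 : (e i₀).1 + x.1 = d.1 := congrArg Prod.fst h1
              have : x.1 = β₀ := by
                apply add_left_cancel (a := (e i₀).1)
                rw [hx1, hβ₀]
              exact Prod.ext this h3
            · intro habs
              exfalso
              apply habs
              rw [Finset.HasAntidiagonal.mem_antidiagonal, add_comm]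
              exact hβ₀.symm
          · intro i _ hne
            apply Finset.sum_eq_zero
            intro x hx
            rw [if_neg]
            rintro ⟨h1, h2, h3⟩
            rw [h1] at h2
            exact delta_disjoint hne h2 hd₀
          · intro habs
            exact absurd (Finset.mem_univ i₀) habs
        · rw [dif_neg h]
          apply Finset.sum_eq_zero
          intro i _
          apply Finset.sum_eq_zero
          intro x hx
          rw [if_neg]
          rintro ⟨h1, h2, h3⟩
          exact h ⟨i, h1 ▸ h2⟩

include hΦe in
lemma amap_cinit_ne_zero (i : Fin q) : amap (cinit e Φ i) ≠ 0 := by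
  intro h0
  have h1 : amap (cinit e Φ i) = amap (0 : A) := by rw [h0, map_zero]
  exact cinit_ne_zero e Φ hΦe i (IsFractionRing.injective A 𝕂 h1)

lemma coeff_Rs (G : Fin p → MvPowerSeries (Fin n) 𝕂) (d : Idx n p) :
    MvPowerSeries.coeff d.1 (Rs e Φ G d.2) =
      if d ∈ DeltaC e then divF e Φ G d else 0 := by
  rw [MvPowerSeries.coeff_apply]
  rcases d with ⟨α, j⟩
  rfl

include hΦe in
lemma division_id (G : Fin p → MvPowerSeries (Fin n) 𝕂) (j : Fin p) :
    G j = (∑ i, Qs e Φ G i * MvPowerSeries.map amap (Φ i j)) + Rs e Φ G j := by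
  apply MvPowerSeries.ext
  intro α
  set d : Idx n p := (α, j) with hd
  have h1 : MvPowerSeries.coeff α (∑ i, Qs e Φ G i *
      MvPowerSeries.map amap (Φ i j)) =
      MvPowerSeries.coeff d.1 ((∑ i, fun j => Qs e Φ G i *
        MvPowerSeries.map amap (Φ i j)) d.2) := by
    rw [Finset.sum_apply]
  rw [map_add, h1, coeff_sum_QPhi e Φ hΦe]
  have h2 : MvPowerSeries.coeff α (Rs e Φ G j) =
      if d ∈ DeltaC e then divF e Φ G d else 0 := coeff_Rs e Φ G d
  rw [h2]
  have h3 : MvPowerSeries.coeff α (G j) = MvPowerSeries.coeff d.1 (G d.2) := rfl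
  rw [h3]
  by_cases h : ∃ i, d ∈ Delta e i
  · rw [dif_pos h, if_neg, add_zero, divF_eq]
    · rw [cfac, dif_pos h]
      set c := amap (cinit e Φ h.choose) with hc
      have hcne : c ≠ 0 := amap_cinit_ne_zero e Φ hΦe h.choose
      field_simp
      ring
    · intro hC
      exact hC (Set.mem_iUnion.mpr ⟨h.choose, h.choose_spec⟩)
  · rw [dif_neg h, add_zero, if_pos, divF_eq, cfac, dif_neg h, one_mul]
    · ring
    · intro hC
      obtain ⟨i, hi⟩ := Set.mem_iUnion.mp hC
      exact h ⟨i, hi⟩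

lemma divF_mem_B (B : Subring 𝕂) (hBA : ∀ a : A, amap a ∈ B)
    (hBinv : ∀ i, (amap (cinit e Φ i))⁻¹ ∈ B)
    (G : Fin p → MvPowerSeries (Fin n) 𝕂)
    (hGB : ∀ d : Idx n p, MvPowerSeries.coeff d.1 (G d.2) ∈ B) :
    ∀ d, divF e Φ G d ∈ B := by
  intro d
  induction d using idxLT_wf.induction with
  | _ d IH =>
    rw [divF_eq]
    refine Subring.mul_mem _ ?_ (Subring.sub_mem _ (hGB d) ?_)
    · rw [cfac]
      split_ifs with h
      · exact hBinv h.choose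
      · exact Subring.one_mem B
    · apply Subring.sum_mem
      intro i _
      apply Subring.sum_mem
      intro x _
      split_ifs with h2
      · exact Subring.mul_mem _ (IH _ h2.2) (hBA _)
      · exact Subring.zero_mem B

lemma Qs_coeff_mem (B : Subring 𝕂) (hBA : ∀ a : A, amap a ∈ B)
    (hBinv : ∀ i, (amap (cinit e Φ i))⁻¹ ∈ B)
    (G : Fin p → MvPowerSeries (Fin n) 𝕂)
    (hGB : ∀ d : Idx n p, MvPowerSeries.coeff d.1 (G d.2) ∈ B) :
    ∀ (i : Fin q) (α : Fin n →₀ ℕ), MvPowerSeries.coeff α (Qs e Φ G i) ∈ B := by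
  intro i α
  rw [MvPowerSeries.coeff_apply]
  show (if slot e i α ∈ Delta e i then divF e Φ G (slot e i α) else 0) ∈ B
  split_ifs with h
  · exact divF_mem_B e Φ B hBA hBinv G hGB _
  · exact Subring.zero_mem B

lemma Rs_coeff_mem (B : Subring 𝕂) (hBA : ∀ a : A, amap a ∈ B)
    (hBinv : ∀ i, (amap (cinit e Φ i))⁻¹ ∈ B)
    (G : Fin p → MvPowerSeries (Fin n) 𝕂)
    (hGB : ∀ d : Idx n p, MvPowerSeries.coeff d.1 (G d.2) ∈ B) :
    ∀ d : Idx n p, MvPowerSeries.coeff d.1 (Rs e Φ G d.2) ∈ B := by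
  intro d
  rw [coeff_Rs]
  split_ifs with h
  · exact divF_mem_B e Φ B hBA hBinv G hGB _
  · exact Subring.zero_mem B

lemma Qs_supp (G : Fin p → MvPowerSeries (Fin n) 𝕂) :
    ∀ (i : Fin q) (β : Fin n →₀ ℕ), MvPowerSeries.coeff β (Qs e Φ G i) ≠ 0 →
      (((e i).1 + β, (e i).2) : Idx n p) ∈ Delta e i := by
  intro i β h
  rw [MvPowerSeries.coeff_apply] at h
  by_contra hc
  apply h
  show (if slot e i β ∈ Delta e i then divF e Φ G (slot e i β) else 0) = 0
  exact if_neg hc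

lemma Rs_supp (G : Fin p → MvPowerSeries (Fin n) 𝕂) :
    suppV (Rs e Φ G) ⊆ DeltaC e := by
  intro d hd
  by_contra hc
  apply hd
  show MvPowerSeries.coeff d.1 (Rs e Φ G d.2) = 0
  rw [coeff_Rs, if_neg hc]

end Four


theorem stmt4 {n p q : ℕ} {A : Type} [CommRing A] [IsDomain A]
    (M : Submodule (MvPowerSeries (Fin n) A) (Fin p → MvPowerSeries (Fin n) A))
    (e : Fin q → Idx n p) (heinj : Function.Injective e)
    (hevert : ∀ d : Idx n p, IsVertex (diagramOf M) d ↔ ∃ i, e i = d)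
    (Φ : Fin q → (Fin p → MvPowerSeries (Fin n) A))
    (hΦM : ∀ i, Φ i ∈ M) (hΦ0 : ∀ i, Φ i ≠ 0) (hΦe : ∀ i, IsExpOf (Φ i) (e i))
    (B : Subring (FractionRing A))
    (hBA : ∀ a : A, algebraMap A (FractionRing A) a ∈ B)
    (hBinv : ∀ i, (algebraMap A (FractionRing A)
      (MvPowerSeries.coeff (e i).1 (Φ i (e i).2)))⁻¹ ∈ B) :
    -- (a) 𝒩(M) = Δ₁ ∪ ⋯ ∪ Δ_q
    diagramOf M = ⋃ i : Fin q, Delta e i ∧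
    -- (b) Φ₁,…,Φ_q generate B⟦x⟧·M
    (∀ G : Fin p → MvPowerSeries (Fin n) (FractionRing A),
      MemBxM B M G ↔
        ∃ Q : Fin q → MvPowerSeries (Fin n) (FractionRing A),
          (∀ i α, MvPowerSeries.coeff α (Q i) ∈ B) ∧
          G = ∑ i, fun j => Q i *
            MvPowerSeries.map (algebraMap A (FractionRing A)) (Φ i j)) ∧
    -- (c) G ∈ B⟦x⟧·M iff the remainder of the division of G by Φ₁,…,Φ_q vanishes
    (∀ (G : Fin p → MvPowerSeries (Fin n) (FractionRing A))
       (Q : Fin q → MvPowerSeries (Fin n) (FractionRing A))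
       (R : Fin p → MvPowerSeries (Fin n) (FractionRing A)),
      (∀ d : Idx n p, MvPowerSeries.coeff d.1 (G d.2) ∈ B) →
      (∀ i α, MvPowerSeries.coeff α (Q i) ∈ B) →
      (∀ d : Idx n p, MvPowerSeries.coeff d.1 (R d.2) ∈ B) →
      (∀ j, G j = (∑ i, Q i *
        MvPowerSeries.map (algebraMap A (FractionRing A)) (Φ i j)) + R j) →
      (∀ i, ∀ β : Fin n →₀ ℕ, MvPowerSeries.coeff β (Q i) ≠ 0 →
        ((e i).1 + β, (e i).2) ∈ Delta e i) →
      suppV R ⊆ DeltaC e →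
      (MemBxM B M G ↔ R = 0)) := by

  classical
  have hBinv' : ∀ i, (algebraMap A (FractionRing A) (cinit e Φ i))⁻¹ ∈ B := hBinv
  have hpa : diagramOf M = ⋃ i : Fin q, Delta e i := part_a hevert
  have hpartc : ∀ (G : Fin p → MvPowerSeries (Fin n) (FractionRing A))
       (Q : Fin q → MvPowerSeries (Fin n) (FractionRing A))
       (R : Fin p → MvPowerSeries (Fin n) (FractionRing A)),
      (∀ d : Idx n p, MvPowerSeries.coeff d.1 (G d.2) ∈ B) →
      (∀ i α, MvPowerSeries.coeff α (Q i) ∈ B) →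
      (∀ d : Idx n p, MvPowerSeries.coeff d.1 (R d.2) ∈ B) →
      (∀ j, G j = (∑ i, Q i *
        MvPowerSeries.map (algebraMap A (FractionRing A)) (Φ i j)) + R j) →
      (∀ i, ∀ β : Fin n →₀ ℕ, MvPowerSeries.coeff β (Q i) ≠ 0 →
        ((e i).1 + β, (e i).2) ∈ Delta e i) →
      suppV R ⊆ DeltaC e →
      (MemBxM B M G ↔ R = 0) := by
    intro G Q R hGB hQB hRB hGQR hQsupp hRsupp
    constructor
    · intro hG
      by_contra hR0
      have hQΦ : MemBxM B M (∑ i, fun j => Q i *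
          MvPowerSeries.map (algebraMap A (FractionRing A)) (Φ i j)) :=
        ⟨q, Q, Φ, hQB, hΦM, rfl⟩
      have hRmem : MemBxM B M R := by
        have hRe : R = G - (∑ i, fun j => Q i *
            MvPowerSeries.map (algebraMap A (FractionRing A)) (Φ i j)) := by
          funext j
          have hS : (∑ i, fun j' => Q i *
              MvPowerSeries.map (algebraMap A (FractionRing A)) (Φ i j')) j =
              ∑ i, Q i * MvPowerSeries.map (algebraMap A (FractionRing A)) (Φ i j) :=
            Finset.sum_apply _ _ _
          rw [Pi.sub_apply, hS, hGQR j]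
          ring
        rw [hRe]
        exact memBxM_sub hG hQΦ
      obtain ⟨d, hd⟩ := exists_exp hR0
      have hdiag : d ∈ diagramOf M := exp_mem_diagram_of_memBxM hRmem hR0 hd
      rw [hpa] at hdiag
      exact (hRsupp hd.1) hdiag
    · intro hR0
      refine ⟨q, Q, Φ, hQB, hΦM, ?_⟩
      funext j
      rw [Finset.sum_apply]
      rw [hGQR j, hR0]
      simp
  refine ⟨hpa, ?_, hpartc⟩
  intro G
  constructor
  · intro hG
    have hGB := memBxM_coeff_mem hBA hG
    have hQB := Qs_coeff_mem e Φ B hBA hBinv' G hGB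
    have hiff := hpartc G (Qs e Φ G) (Rs e Φ G) hGB hQB
      (Rs_coeff_mem e Φ B hBA hBinv' G hGB) (division_id e Φ hΦe G)
      (Qs_supp e Φ G) (Rs_supp e Φ G)
    have hR0 : Rs e Φ G = 0 := hiff.mp hG
    refine ⟨Qs e Φ G, hQB, ?_⟩
    funext j
    rw [Finset.sum_apply]
    have hdj := division_id e Φ hΦe G j
    rw [hR0] at hdj
    simpa using hdj
  · rintro ⟨Q, hQB, hGeq⟩
    exact ⟨q, Q, Φ, hQB, hΦM, hGeq⟩
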